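/- arXiv:0903.2000 — 3 statements merged into one kernel-verified Lean document; each statement's English description precedes it below -/
import Mathlib

section
/- Let V and E be finite types with maps s, r : E → V and adjacency matrix A. Then the circuit configurations D whose induced permutation ρ_D is the identity permutation of V are exactly the finsets D of loop edges (edges e with s e = r e) whose base vertices are pairwise distinct, each such D satisfies c(D) = D.card, and consequently ∏_{v ∈ V} (1 − A v v) = Σ_D (−1)^{D.card}, the sum ranging over all finsets D of loop edges with pairwise distinct base vertices. -/
open scoped Classical

/-- The adjacency matrix of the finite directed multigraph with vertices `V`, edges `E`,
source map `s` and range map `r`: the `(v, w)` entry is the number of edges from `v` to `w`. -/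
noncomputable def adjMatrix {V E : Type*} (s r : E → V) : Matrix V V ℤ :=
  Matrix.of fun v w => (Nat.card {e : E // s e = v ∧ r e = w} : ℤ)

/-- A circuit configuration: a finset of edges on which `s` and `r` are injective and
whose `s`-image equals its `r`-image.  Such finsets are precisely the unions of the
circuits of vertex-disjoint sets of directed circuits. -/
def IsCircuitConfig {V E : Type*} [DecidableEq V] (s r : E → V) (D : Finset E) : Prop :=
  Set.InjOn s ↑D ∧ Set.InjOn r ↑D ∧ D.image s = D.image r

/-- `ρ` is the permutation induced by the finset of edges `D`: it sends `s e` to `r e`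
for each `e ∈ D` and fixes every vertex outside the `s`-image of `D`. -/
def Induces {V E : Type*} [DecidableEq V] (s r : E → V) (D : Finset E)
    (ρ : Equiv.Perm V) : Prop :=
  (∀ e ∈ D, ρ (s e) = r e) ∧ ∀ v ∉ D.image s, ρ v = v

/-- The permutation induced by a circuit configuration `D` (the identity if no
permutation is induced by `D`). -/
noncomputable def inducedPerm {V E : Type*} [DecidableEq V] (s r : E → V)
    (D : Finset E) : Equiv.Perm V :=
  if h : ∃ ρ : Equiv.Perm V, Induces s r D ρ then h.choose else 1

/-- The setoid on `V` whose classes are the orbits of the permutation `ρ`. -/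
def sameCycleSetoid {V : Type*} (ρ : Equiv.Perm V) : Setoid V where
  r := ρ.SameCycle
  iseqv := ⟨fun x => Equiv.Perm.SameCycle.refl ρ x,
    Equiv.Perm.SameCycle.symm, Equiv.Perm.SameCycle.trans⟩

/-- The number of circuits of a configuration `D` with induced permutation `ρ`:
the number of orbits of `ρ` that meet the `s`-image of `D`. -/
noncomputable def numCircuits {V E : Type*} (s : E → V) (D : Finset E)
    (ρ : Equiv.Perm V) : ℕ :=
  (Quotient.mk (sameCycleSetoid ρ) '' (s '' ↑D)).ncard

section Aux

variable {V E : Type*} [Fintype V] [Fintype E] [DecidableEq V] {s r : E → V}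

lemma exists_induces {D : Finset E} (h : IsCircuitConfig s r D) :
    ∃ ρ : Equiv.Perm V, Induces s r D ρ := by
  obtain ⟨hs, hr, him⟩ := h
  set f : V → V := fun v => if hv : ∃ e ∈ D, s e = v then r hv.choose else v with hf
  have hpos : ∀ v (hv : ∃ e ∈ D, s e = v), f v = r hv.choose := fun v hv => dif_pos hv
  have hneg : ∀ v, ¬(∃ e ∈ D, s e = v) → f v = v := fun v hv => dif_neg hv
  have hmemf : ∀ v (hv : ∃ e ∈ D, s e = v), f v ∈ D.image r := by
    intro v hv
    rw [hpos v hv]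
    exact Finset.mem_image.2 ⟨hv.choose, hv.choose_spec.1, rfl⟩
  have hinj : Function.Injective f := by
    intro u v huv
    by_cases hu : ∃ e ∈ D, s e = u <;> by_cases hv : ∃ e ∈ D, s e = v
    · obtain ⟨heu1, heu2⟩ := hu.choose_spec
      obtain ⟨hev1, hev2⟩ := hv.choose_spec
      rw [hpos u hu, hpos v hv] at huv
      have := hr (Finset.mem_coe.2 heu1) (Finset.mem_coe.2 hev1) huv
      rw [← heu2, ← hev2, this]
    · exfalso
      have h1 : f u ∈ D.image r := hmemf u hu
      rw [hneg v hv] at huv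
      rw [huv, ← him, Finset.mem_image] at h1
      exact hv h1
    · exfalso
      have h1 : f v ∈ D.image r := hmemf v hv
      rw [hneg u hu] at huv
      rw [← huv, ← him, Finset.mem_image] at h1
      exact hu h1
    · rwa [hneg u hu, hneg v hv] at huv
  refine ⟨Equiv.ofBijective f (Finite.injective_iff_bijective.mp hinj), ?_, ?_⟩
  · intro e he
    have hv : ∃ e' ∈ D, s e' = s e := ⟨e, he, rfl⟩
    show f (s e) = r e
    rw [hpos _ hv]
    congr 1
    exact hs (Finset.mem_coe.2 hv.choose_spec.1) (Finset.mem_coe.2 he) hv.choose_spec.2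
  · intro v hv
    show f v = v
    rw [Finset.mem_image] at hv
    exact hneg v hv

lemma induces_id {D : Finset E} (hloop : ∀ e ∈ D, s e = r e) :
    Induces s r D (1 : Equiv.Perm V) :=
  ⟨fun e he => (hloop e he).symm ▸ rfl, fun _ _ => rfl⟩

lemma induces_eq_one {D : Finset E} (hloop : ∀ e ∈ D, s e = r e)
    {ρ : Equiv.Perm V} (h : Induces s r D ρ) : ρ = 1 := by
  ext v
  by_cases hv : v ∈ D.image s
  · obtain ⟨e, he, rfl⟩ := Finset.mem_image.1 hv
    rw [h.1 e he, ← hloop e he]; rfl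
  · rw [h.2 v hv]; rfl

lemma inducedPerm_eq_one {D : Finset E} (hloop : ∀ e ∈ D, s e = r e) :
    inducedPerm s r D = 1 := by
  have hex : ∃ ρ : Equiv.Perm V, Induces s r D ρ := ⟨1, induces_id hloop⟩
  rw [inducedPerm, dif_pos hex]
  exact induces_eq_one hloop hex.choose_spec

lemma part1 (s r : E → V) (D : Finset E) :
    (IsCircuitConfig s r D ∧ inducedPerm s r D = 1) ↔
      ((∀ e ∈ D, s e = r e) ∧ Set.InjOn s ↑D) := by
  constructor
  · rintro ⟨hcfg, hone⟩
    have hex := exists_induces hcfg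
    rw [inducedPerm, dif_pos hex] at hone
    have hind : Induces s r D 1 := hone ▸ hex.choose_spec
    exact ⟨fun e he => (hind.1 e he).symm ▸ rfl, hcfg.1⟩
  · rintro ⟨hloop, hinj⟩
    refine ⟨⟨hinj, ?_, ?_⟩, inducedPerm_eq_one hloop⟩
    · intro a ha b hb hab
      exact hinj ha hb (by rw [hloop a ha, hloop b hb, hab])
    · exact Finset.image_congr fun e he => hloop e (Finset.mem_coe.1 he)

lemma part2 (s r : E → V) (D : Finset E) (hloop : ∀ e ∈ D, s e = r e)
    (hinj : Set.InjOn s ↑D) :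
    numCircuits s D (inducedPerm s r D) = D.card := by
  rw [inducedPerm_eq_one hloop, numCircuits]
  have hmk : Function.Injective (Quotient.mk (sameCycleSetoid (1 : Equiv.Perm V))) := by
    intro x y h
    obtain ⟨n, hn⟩ := Quotient.exact h
    simpa using hn
  rw [Set.ncard_image_of_injective _ hmk, Set.ncard_image_of_injOn hinj,
    Set.ncard_coe_finset]

variable (s) in
noncomputable def cfgOf (p : ∀ v : V, Option {e : E // s e = v ∧ r e = v}) : Finset E :=
  Finset.univ.filter (fun e => ((p (s e)).map Subtype.val) = some e)

variable (s r) in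
noncomputable def cfgInv (D : Finset E) (v : V) : Option {e : E // s e = v ∧ r e = v} :=
  if h : ∃ e ∈ D, s e = v ∧ r e = v then some ⟨h.choose, h.choose_spec.2⟩ else none

lemma mem_cfgOf {p : ∀ v : V, Option {e : E // s e = v ∧ r e = v}} {e : E} :
    e ∈ cfgOf s p ↔ ((p (s e)).map Subtype.val) = some e := by
  simp [cfgOf]

lemma cfgOf_loop {p : ∀ v : V, Option {e : E // s e = v ∧ r e = v}} {e : E}
    (he : e ∈ cfgOf s p) : s e = r e := by
  obtain ⟨a, _, ha2⟩ := Option.map_eq_some_iff.1 (mem_cfgOf.1 he)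
  have := a.2
  rw [ha2] at this
  rw [this.1, this.2]

lemma cfgOf_injOn {p : ∀ v : V, Option {e : E // s e = v ∧ r e = v}} :
    Set.InjOn s ↑(cfgOf s p) := by
  intro e1 he1 e2 he2 heq
  have h1 := mem_cfgOf.1 (Finset.mem_coe.1 he1)
  have h2 := mem_cfgOf.1 (Finset.mem_coe.1 he2)
  rw [← heq] at h2
  rw [h1] at h2
  exact (Option.some_injective E h2)

lemma mem_cfgOf_of_some {p : ∀ v : V, Option {e : E // s e = v ∧ r e = v}} {v : V}
    {x : {e : E // s e = v ∧ r e = v}} (hx : p v = some x) : (x : E) ∈ cfgOf s p := by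
  rw [mem_cfgOf, x.2.1, hx, Option.map_some]

lemma cfgInv_cfgOf (p : ∀ v : V, Option {e : E // s e = v ∧ r e = v}) :
    cfgInv s r (cfgOf s p) = p := by
  funext v
  rcases hpv : p v with _ | x
  · rw [cfgInv, dif_neg]
    rintro ⟨e, he, hse, -⟩
    have h1 := mem_cfgOf.1 he
    rw [hse, hpv] at h1
    simp at h1
  · have hx : (x : E) ∈ cfgOf s p := mem_cfgOf_of_some hpv
    have h : ∃ e ∈ cfgOf s p, s e = v ∧ r e = v := ⟨x, hx, x.2⟩
    rw [cfgInv, dif_pos h]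
    congr 1
    apply Subtype.ext
    have h1 := mem_cfgOf.1 h.choose_spec.1
    rw [h.choose_spec.2.1, hpv, Option.map_some] at h1
    exact (Option.some_injective E h1).symm

lemma cfgOf_cfgInv {D : Finset E} (hloop : ∀ e ∈ D, s e = r e)
    (hinj : Set.InjOn s ↑D) : cfgOf s (cfgInv s r D) = D := by
  ext e
  rw [mem_cfgOf]
  constructor
  · intro h1
    obtain ⟨a, ha1, ha2⟩ := Option.map_eq_some_iff.1 h1
    rw [cfgInv] at ha1
    split_ifs at ha1 with h
    have := congrArg Subtype.val (Option.some_injective _ ha1)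
    simp only at this
    rw [← ha2, ← this]
    exact h.choose_spec.1
  · intro he
    have h : ∃ e' ∈ D, s e' = s e ∧ r e' = s e := ⟨e, he, rfl, (hloop e he).symm⟩
    rw [cfgInv, dif_pos h, Option.map_some]
    congr 1
    exact hinj (Finset.mem_coe.2 h.choose_spec.1) (Finset.mem_coe.2 he) h.choose_spec.2.1

lemma cfgOf_card (p : ∀ v : V, Option {e : E // s e = v ∧ r e = v}) :
    (Finset.univ.filter (fun v => (p v).isSome)).card = (cfgOf s p).card := by
  refine (Finset.card_nbij (fun e => s e) ?_ cfgOf_injOn ?_).symm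
  · intro e he
    have h1 := mem_cfgOf.1 he
    obtain ⟨a, ha1, -⟩ := Option.map_eq_some_iff.1 h1
    simp [ha1]
  · intro v hv
    simp only [Finset.coe_filter, Set.mem_setOf_eq] at hv
    obtain ⟨x, hx⟩ := Option.isSome_iff_exists.1 hv.2
    exact ⟨(x : E), Finset.mem_coe.2 (mem_cfgOf_of_some hx), x.2.1⟩

lemma sign_eq (p : ∀ v : V, Option {e : E // s e = v ∧ r e = v}) :
    ∏ v : V, (if (p v).isSome then (-1 : ℤ) else 1) = (-1 : ℤ) ^ (cfgOf s p).card := by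
  rw [Finset.prod_ite, Finset.prod_const, Finset.prod_const, one_pow, mul_one, cfgOf_card]

lemma part3 (s r : E → V) :
    ∏ v : V, (1 - adjMatrix s r v v) =
      ∑ D ∈ Finset.univ.filter
          (fun D : Finset E => (∀ e ∈ D, s e = r e) ∧ Set.InjOn s ↑D),
        (-1 : ℤ) ^ D.card := by
  have step1 : ∀ v : V, (1 - adjMatrix s r v v) =
      ∑ o : Option {e : E // s e = v ∧ r e = v}, (if o.isSome then (-1 : ℤ) else 1) := by
    intro v
    rw [Fintype.sum_option]
    simp [adjMatrix, Nat.card_eq_fintype_card, Finset.card_univ, sub_eq_add_neg]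
  calc ∏ v : V, (1 - adjMatrix s r v v)
      = ∏ v : V, ∑ o ∈ (Finset.univ :
          Finset (Option {e : E // s e = v ∧ r e = v})), (if o.isSome then (-1 : ℤ) else 1) :=
        Finset.prod_congr rfl fun v _ => step1 v
    _ = ∑ p ∈ Fintype.piFinset (fun v : V => (Finset.univ :
          Finset (Option {e : E // s e = v ∧ r e = v}))),
          ∏ v : V, (if (p v).isSome then (-1 : ℤ) else 1) := Finset.prod_univ_sum _ _
    _ = ∑ p ∈ (Finset.univ : Finset (∀ v : V, Option {e : E // s e = v ∧ r e = v})),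
          ∏ v : V, (if (p v).isSome then (-1 : ℤ) else 1) := by rw [Fintype.piFinset_univ]
    _ = ∑ D ∈ Finset.univ.filter
          (fun D : Finset E => (∀ e ∈ D, s e = r e) ∧ Set.InjOn s ↑D),
          (-1 : ℤ) ^ D.card := by
        refine Finset.sum_nbij' (cfgOf s) (cfgInv s r) ?_ ?_ ?_ ?_ ?_
        · intro p _
          simp only [Finset.mem_filter, Finset.mem_univ, true_and]
          exact ⟨fun e he => cfgOf_loop he, cfgOf_injOn⟩
        · intro D _
          exact Finset.mem_univ _
        · intro p _
          exact cfgInv_cfgOf p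
        · intro D hD
          simp only [Finset.mem_filter] at hD
          exact cfgOf_cfgInv hD.2.1 hD.2.2
        · intro p _
          exact sign_eq p

end Aux

/-- The circuit configurations inducing the identity permutation are exactly the finsets
of loop edges with pairwise distinct base vertices; each such configuration `D` has
`c(D) = D.card` circuits; and consequently `∏ v, (1 - A v v)` equals the signed count
`∑ D, (-1) ^ D.card` over all finsets `D` of loop edges with pairwise distinct base
vertices. -/
theorem identity_perm_circuit_configs {V E : Type*} [Fintype V] [Fintype E] [DecidableEq V]
    (s r : E → V) :
    (∀ D : Finset E,
        (IsCircuitConfig s r D ∧ inducedPerm s r D = 1) ↔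
          ((∀ e ∈ D, s e = r e) ∧ Set.InjOn s ↑D)) ∧
    (∀ D : Finset E, (∀ e ∈ D, s e = r e) → Set.InjOn s ↑D →
        numCircuits s D (inducedPerm s r D) = D.card) ∧
    (∏ v : V, (1 - adjMatrix s r v v) =
      ∑ D ∈ Finset.univ.filter
          (fun D : Finset E => (∀ e ∈ D, s e = r e) ∧ Set.InjOn s ↑D),
        (-1 : ℤ) ^ D.card) := by
  exact ⟨part1 s r, part2 s r, part3 s r⟩
end

section
/- Let V and E be finite types with maps s, r : E → V and adjacency matrix A, and let ρ be a permutation of V which is a single cycle whose support is all of V (ρ is a cycle and has no fixed points). Then every circuit configuration D with induced permutation ρ_D = ρ satisfies c(D) = 1, and the number of circuit configurations D with ρ_D = ρ equals ∏_{v ∈ V} A v (ρ v). -/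
open scoped Classical

lemma induces_unique {V E : Type*} [DecidableEq V] (s r : E → V) (D : Finset E)
    {ρ₁ ρ₂ : Equiv.Perm V} (h1 : Induces s r D ρ₁) (h2 : Induces s r D ρ₂) : ρ₁ = ρ₂ := by
  ext v
  by_cases hv : v ∈ D.image s
  · obtain ⟨e, he, rfl⟩ := Finset.mem_image.mp hv
    rw [h1.1 e he, h2.1 e he]
  · rw [h1.2 v hv, h2.2 v hv]

lemma inducedPerm_eq_iff {V E : Type*} [DecidableEq V] (s r : E → V) (D : Finset E)
    {ρ : Equiv.Perm V} (hρ : ρ ≠ 1) : inducedPerm s r D = ρ ↔ Induces s r D ρ := by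
  constructor
  · intro h
    by_cases hex : ∃ ρ' : Equiv.Perm V, Induces s r D ρ'
    · rw [inducedPerm, dif_pos hex] at h; exact h ▸ hex.choose_spec
    · rw [inducedPerm, dif_neg hex] at h; exact absurd h.symm hρ
  · intro h
    have hex : ∃ ρ' : Equiv.Perm V, Induces s r D ρ' := ⟨ρ, h⟩
    rw [inducedPerm, dif_pos hex]
    exact induces_unique s r D hex.choose_spec h

/-- If `ρ` is a single cycle moving every vertex of `V`, then every circuit configuration
inducing `ρ` consists of a single circuit (`c(D) = 1`), and the number of circuit
configurations inducing `ρ` equals `∏ v, A v (ρ v)`. -/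
theorem n_cycle_circuit_configs {V E : Type*} [Fintype V] [Fintype E] [DecidableEq V]
    (s r : E → V) (ρ : Equiv.Perm V) (hc : ρ.IsCycle) (hfix : ∀ v, ρ v ≠ v) :
    (∀ D : Finset E, IsCircuitConfig s r D → inducedPerm s r D = ρ →
        numCircuits s D ρ = 1) ∧
    ((Finset.univ.filter
        (fun D : Finset E => IsCircuitConfig s r D ∧ inducedPerm s r D = ρ)).card : ℤ) =
      ∏ v : V, adjMatrix s r v (ρ v) := by
  obtain ⟨x, hx, -⟩ := id hc
  have hρ1 : ρ ≠ 1 := fun h => hfix x (by rw [h]; rfl)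
  have image_s_univ : ∀ D : Finset E, Induces s r D ρ → D.image s = Finset.univ := by
    intro D hind
    apply Finset.eq_univ_iff_forall.mpr
    intro v
    by_contra h
    exact hfix v (hind.2 v h)
  constructor
  · intro D hD hind'
    have hind := (inducedPerm_eq_iff s r D hρ1).mp hind'
    have himg := image_s_univ D hind
    have hs : s '' ↑D = Set.univ := by
      apply Set.eq_univ_iff_forall.mpr
      intro v
      obtain ⟨e, he, rfl⟩ := Finset.mem_image.mp (himg ▸ Finset.mem_univ v)
      exact ⟨e, he, rfl⟩
    have hsub : Subsingleton (Quotient (sameCycleSetoid ρ)) := ⟨by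
      rintro ⟨a⟩ ⟨b⟩
      exact Quotient.sound (hc.sameCycle (hfix a) (hfix b))⟩
    have hne : Nonempty (Quotient (sameCycleSetoid ρ)) := ⟨Quotient.mk _ x⟩
    have hrange : Quotient.mk (sameCycleSetoid ρ) '' Set.univ = Set.univ := by
      apply Set.eq_univ_iff_forall.mpr
      rintro ⟨a⟩
      exact ⟨a, Set.mem_univ a, rfl⟩
    rw [numCircuits, hs, hrange, Set.ncard_univ]
    exact Nat.card_eq_one_iff_unique.mpr ⟨hsub, hne⟩
  · have hbij : (Finset.univ : Finset (∀ v : V, {e : E // s e = v ∧ r e = ρ v})).card =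
        (Finset.univ.filter
          (fun D : Finset E => IsCircuitConfig s r D ∧ inducedPerm s r D = ρ)).card := by
      apply Finset.card_bij (fun f _ => Finset.univ.image (fun v => (f v : E)))
      · intro f _
        simp only [Finset.mem_filter, Finset.mem_univ, true_and]
        have hmem : ∀ e : E, e ∈ Finset.univ.image (fun v => ((f v : E))) ↔
            ∃ v, (f v : E) = e := by
          intro e; simp
        have hself : ∀ e ∈ Finset.univ.image (fun v => ((f v : E))), (f (s e) : E) = e := by
          intro e he
          obtain ⟨v, rfl⟩ := (hmem e).mp he
          rw [(f v).2.1]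
        have hinjs : Set.InjOn s ↑(Finset.univ.image (fun v => ((f v : E)))) := by
          intro e₁ h₁ e₂ h₂ h
          rw [← hself e₁ h₁, ← hself e₂ h₂, h]
        have hinjr : Set.InjOn r ↑(Finset.univ.image (fun v => ((f v : E)))) := by
          intro e₁ h₁ e₂ h₂ h
          obtain ⟨v₁, rfl⟩ := (hmem e₁).mp h₁
          obtain ⟨v₂, rfl⟩ := (hmem e₂).mp h₂
          rw [(f v₁).2.2, (f v₂).2.2] at h
          rw [ρ.injective h]
        have himgs : (Finset.univ.image (fun v => ((f v : E)))).image s = Finset.univ := by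
          apply Finset.eq_univ_iff_forall.mpr
          intro v
          exact Finset.mem_image.mpr ⟨(f v : E), (hmem _).mpr ⟨v, rfl⟩, (f v).2.1⟩
        have himgr : (Finset.univ.image (fun v => ((f v : E)))).image r = Finset.univ := by
          apply Finset.eq_univ_iff_forall.mpr
          intro v
          refine Finset.mem_image.mpr ⟨(f (ρ⁻¹ v) : E), (hmem _).mpr ⟨ρ⁻¹ v, rfl⟩, ?_⟩
          rw [(f (ρ⁻¹ v)).2.2]
          exact (Equiv.Perm.inv_eq_iff_eq.mp rfl).symm
        have hind : Induces s r (Finset.univ.image (fun v => ((f v : E)))) ρ := by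
          constructor
          · intro e he
            obtain ⟨v, rfl⟩ := (hmem e).mp he
            rw [(f v).2.1, (f v).2.2]
          · intro v hv
            rw [himgs] at hv
            exact absurd (Finset.mem_univ v) hv
        exact ⟨⟨hinjs, hinjr, himgs.trans himgr.symm⟩,
          (inducedPerm_eq_iff s r _ hρ1).mpr hind⟩
      · intro f _ g _ h
        funext v
        apply Subtype.ext
        have hfv : (f v : E) ∈ Finset.univ.image (fun v => (g v : E)) := by
          rw [← h]
          exact Finset.mem_image.mpr ⟨v, Finset.mem_univ v, rfl⟩
        obtain ⟨w, -, hw⟩ := Finset.mem_image.mp hfv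
        have hwv : w = v := by rw [← (g w).2.1, hw, (f v).2.1]
        rw [← hw, hwv]
      · intro D hD
        simp only [Finset.mem_filter, Finset.mem_univ, true_and] at hD
        obtain ⟨hcfg, hind'⟩ := hD
        have hind := (inducedPerm_eq_iff s r D hρ1).mp hind'
        have himg := image_s_univ D hind
        have hex : ∀ v : V, ∃ e, e ∈ D ∧ s e = v := by
          intro v
          obtain ⟨e, he, hse⟩ := Finset.mem_image.mp (himg ▸ Finset.mem_univ v)
          exact ⟨e, he, hse⟩
        choose ed hed hsed using hex
        refine ⟨fun v => ⟨ed v, hsed v, ?_⟩, Finset.mem_univ _, ?_⟩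
        · rw [← hind.1 (ed v) (hed v), hsed v]
        · ext e
          simp only [Finset.mem_image, Finset.mem_univ, true_and]
          constructor
          · rintro ⟨v, rfl⟩; exact hed v
          · intro he
            exact ⟨s e, hcfg.1 (hed (s e)) he (hsed (s e))⟩
    rw [← hbij, Finset.card_univ, Fintype.card_pi]
    push_cast
    apply Finset.prod_congr rfl
    intro v _
    rw [adjMatrix, Matrix.of_apply, Nat.card_eq_fintype_card]
end

section
/- (Corollary.) Let V and E be finite types with maps s, r : E → V and adjacency matrix A, and let v ∈ V be a source (no edge e has r e = v) or a sink (no edge e has s e = v). Let V' = {w ∈ V | w ≠ v}, let E' = {e ∈ E | s e ≠ v and r e ≠ v}, and let A' be the adjacency matrix of the graph (V', E') with the restricted source and range maps. Then the Parry–Sullivan numbers agree: det(1 − A) = det(1 − A'). -/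
open scoped Classical

/-- Corollary: deleting a source or sink vertex `v` (together with its adjacent edges)
does not change the Parry–Sullivan number `det (1 - A)`. -/
theorem parry_sullivan_delete_source_or_sink {V E : Type*} [Fintype V] [Fintype E]
    [DecidableEq V] (s r : E → V) (v : V)
    (hv : (∀ e : E, r e ≠ v) ∨ (∀ e : E, s e ≠ v)) :
    Matrix.det ((1 : Matrix V V ℤ) - adjMatrix s r) =
      Matrix.det ((1 : Matrix {w : V // w ≠ v} {w : V // w ≠ v} ℤ) -
        adjMatrix (fun e : {e : E // s e ≠ v ∧ r e ≠ v} =>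
            (⟨s e.1, e.2.1⟩ : {w : V // w ≠ v}))
          (fun e : {e : E // s e ≠ v ∧ r e ≠ v} =>
            (⟨r e.1, e.2.2⟩ : {w : V // w ≠ v}))) := by
  classical
  set A' : Matrix {w : V // w ≠ v} {w : V // w ≠ v} ℤ :=
    adjMatrix (fun e : {e : E // s e ≠ v ∧ r e ≠ v} =>
        (⟨s e.1, e.2.1⟩ : {w : V // w ≠ v}))
      (fun e : {e : E // s e ≠ v ∧ r e ≠ v} =>
        (⟨r e.1, e.2.2⟩ : {w : V // w ≠ v})) with hA'
  have hA : ∀ w w' : {w : V // w ≠ v}, adjMatrix s r w.1 w'.1 = A' w w' := by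
    intro w w'
    simp only [hA', adjMatrix, Matrix.of_apply]
    norm_cast
    apply Nat.card_congr
    refine ⟨fun e => ⟨⟨e.1, by rw [e.2.1]; exact w.2, by rw [e.2.2]; exact w'.2⟩,
        Subtype.ext e.2.1, Subtype.ext e.2.2⟩,
      fun e => ⟨e.1.1, congrArg Subtype.val e.2.1, congrArg Subtype.val e.2.2⟩,
      fun e => rfl, fun e => by ext; rfl⟩
  set B : Matrix V V ℤ := (1 : Matrix V V ℤ) - adjMatrix s r with hB
  haveI : Unique {w : V // ¬ w ≠ v} :=
    ⟨⟨⟨v, not_not.mpr rfl⟩⟩, fun w => Subtype.ext (not_not.mp w.2)⟩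
  set e : {w : V // w ≠ v} ⊕ {w : V // ¬ w ≠ v} ≃ V :=
    Equiv.sumCompl (fun w => w ≠ v) with he
  rw [← Matrix.det_submatrix_equiv_self e B,
    ← Matrix.fromBlocks_toBlocks (B.submatrix e e)]
  have h11 : (B.submatrix e e).toBlocks₁₁ =
      (1 : Matrix {w : V // w ≠ v} {w : V // w ≠ v} ℤ) - A' := by
    ext i j
    simp only [Matrix.toBlocks₁₁, Matrix.of_apply, Matrix.submatrix_apply, he,
      Equiv.sumCompl_apply_inl, hB, Matrix.sub_apply, Matrix.one_apply]
    rw [hA i j]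
    congr 1
    simp [Subtype.ext_iff]
  have hdiag : ∀ i : {w : V // ¬ w ≠ v}, (B.submatrix e e).toBlocks₂₂ i i = 1 := by
    intro i
    have hiv : (e (Sum.inr i)) = v := not_not.mp i.2
    simp only [Matrix.toBlocks₂₂, Matrix.of_apply, Matrix.submatrix_apply, hB,
      Matrix.sub_apply, Matrix.one_apply_eq, hiv, adjMatrix]
    have h0 : Nat.card {e : E // s e = v ∧ r e = v} = 0 := by
      rcases hv with hv | hv
      · exact @Nat.card_of_isEmpty _ (isEmpty_subtype _ |>.mpr fun e h => hv e h.2)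
      · exact @Nat.card_of_isEmpty _ (isEmpty_subtype _ |>.mpr fun e h => hv e h.1)
    rw [h0]
    ring
  have hd22 : ((B.submatrix e e).toBlocks₂₂).det = 1 := by
    rw [Matrix.det_unique, hdiag]
  rcases hv with hv | hv
  · have h12 : (B.submatrix e e).toBlocks₁₂ = 0 := by
      ext i j
      have hjv : (e (Sum.inr j)) = v := not_not.mp j.2
      have hne : (e (Sum.inl i) : V) ≠ v := i.2
      simp only [Matrix.toBlocks₁₂, Matrix.of_apply, Matrix.submatrix_apply, hB,
        Matrix.sub_apply, Matrix.one_apply, hjv, adjMatrix, Matrix.zero_apply]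
      rw [if_neg hne,
        @Nat.card_of_isEmpty _ (isEmpty_subtype _ |>.mpr fun e h => hv e h.2)]
      ring
    rw [h12, Matrix.det_fromBlocks_zero₁₂, h11, hd22, mul_one]
  · have h21 : (B.submatrix e e).toBlocks₂₁ = 0 := by
      ext i j
      have hiv : (e (Sum.inr i)) = v := not_not.mp i.2
      have hne : (e (Sum.inl j) : V) ≠ v := j.2
      simp only [Matrix.toBlocks₂₁, Matrix.of_apply, Matrix.submatrix_apply, hB,
        Matrix.sub_apply, Matrix.one_apply, hiv, adjMatrix, Matrix.zero_apply]
      rw [if_neg (Ne.symm hne),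
        @Nat.card_of_isEmpty _ (isEmpty_subtype _ |>.mpr fun e h => hv e h.1)]
      ring
    rw [h21, Matrix.det_fromBlocks_zero₂₁, h11, hd22, mul_one]
end
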